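/- Let Z = ∂/∂z + i z̄ ∂/∂u act on smooth functions of (z,u) ∈ ℂ × ℝ. For (z,u) ≠ (0,0), the function F(z,u) = log(|z|⁴ + u²) satisfies Z(Z F) = −(Z F)², i.e. Z Z F = −4z̄²/(|z|² − iu)². -/

import Mathlib

open Complex

/-- The CR vector field Z = ∂/∂z + i z̄ ∂/∂u on the Heisenberg group ℂ × ℝ,
where ∂/∂z = ½(∂/∂x − i ∂/∂y) is the Wirtinger derivative. -/
noncomputable def Zop (f : ℂ × ℝ → ℂ) : ℂ × ℝ → ℂ := fun p =>
  (1 / 2 : ℂ) * (fderiv ℝ f p (1, 0) - Complex.I * fderiv ℝ f p (Complex.I, 0))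
    + Complex.I * (starRingEnd ℂ p.1) * fderiv ℝ f p (0, 1)

/-- The CR vector field Z̄ = ∂/∂z̄ − i z ∂/∂u on the Heisenberg group ℂ × ℝ,
where ∂/∂z̄ = ½(∂/∂x + i ∂/∂y). -/
noncomputable def Zbar (f : ℂ × ℝ → ℂ) : ℂ × ℝ → ℂ := fun p =>
  (1 / 2 : ℂ) * (fderiv ℝ f p (1, 0) + Complex.I * fderiv ℝ f p (Complex.I, 0))
    - Complex.I * p.1 * fderiv ℝ f p (0, 1)

/-- The vector field T = ∂/∂u. -/
noncomputable def Tder (f : ℂ × ℝ → ℂ) : ℂ × ℝ → ℂ := fun p => fderiv ℝ f p (0, 1)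

/-- The sublaplacian Δ_b = Z Z̄ + Z̄ Z. -/
noncomputable def Lapb (f : ℂ × ℝ → ℂ) : ℂ × ℝ → ℂ := fun p =>
  Zop (Zbar f) p + Zbar (Zop f) p

noncomputable def Fh : ℂ × ℝ → ℂ := fun q => ((Real.log (‖q.1‖ ^ 4 + q.2 ^ 2) : ℝ) : ℂ)
noncomputable def g : ℂ × ℝ → ℂ := fun q => 2 * (starRingEnd ℂ) q.1 / (q.1 * (starRingEnd ℂ) q.1 - Complex.I * q.2)

lemma N_pos (q : ℂ × ℝ) (hq : q ≠ 0) : 0 < ‖q.1‖ ^ 4 + q.2 ^ 2 := by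
  rcases eq_or_ne q.1 0 with h | h
  · have h2 : q.2 ≠ 0 := fun h2 => hq (Prod.ext h h2)
    have := pow_two_pos_of_ne_zero h2
    positivity
  · have : 0 < ‖q.1‖ := by simpa using h
    positivity

lemma key (q : ℂ × ℝ) : (q.1.re * q.1.re + q.1.im * q.1.im) * (q.1.re * q.1.re + q.1.im * q.1.im) + q.2 * q.2 = ‖q.1‖ ^ 4 + q.2 ^ 2 := by
  have : ‖q.1‖ ^ 4 = (‖q.1‖ ^ 2) ^ 2 := by ring
  rw [this, Complex.sq_norm, Complex.normSq_apply]; ring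

lemma zopF_eq (q : ℂ × ℝ) (hq : q ≠ 0) : Zop Fh q = g q := by
  obtain ⟨z, u⟩ := q
  have h1 : HasFDerivAt (fun q : ℂ × ℝ => q.1) (ContinuousLinearMap.fst ℝ ℂ ℝ) (z, u) := hasFDerivAt_fst
  have h2 : HasFDerivAt (fun q : ℂ × ℝ => q.2) (ContinuousLinearMap.snd ℝ ℂ ℝ) (z, u) := hasFDerivAt_snd
  have hre : HasFDerivAt (fun q : ℂ × ℝ => q.1.re) (Complex.reCLM.comp (ContinuousLinearMap.fst ℝ ℂ ℝ)) (z, u) :=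
    (Complex.reCLM.hasFDerivAt).comp (z, u) h1
  have him : HasFDerivAt (fun q : ℂ × ℝ => q.1.im) (Complex.imCLM.comp (ContinuousLinearMap.fst ℝ ℂ ℝ)) (z, u) :=
    (Complex.imCLM.hasFDerivAt).comp (z, u) h1
  have hns := (hre.mul hre).add (him.mul him)
  have hN := (hns.mul hns).add (h2.mul h2)
  have hN0 : (z.re * z.re + z.im * z.im) * (z.re * z.re + z.im * z.im) + u * u ≠ 0 := by
    have := N_pos (z, u) hq
    have hk := key (z, u)
    simp only at hk ⊢
    rw [hk]
    linarith
  have hlog := (Real.hasDerivAt_log hN0).comp_hasFDerivAt (z, u) hN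
  have hF := (Complex.ofRealCLM.hasFDerivAt).comp (z, u) hlog
  have hFh : HasFDerivAt Fh _ (z, u) := hF.congr_of_eventuallyEq (Filter.Eventually.of_forall (fun w => by
    simp [Fh, Function.comp, ← key w]))
  have hfd := hFh.fderiv
  rw [Zop, hfd]
  simp only [ContinuousLinearMap.comp_apply, ContinuousLinearMap.smul_apply,
    ContinuousLinearMap.add_apply, ContinuousLinearMap.coe_fst', ContinuousLinearMap.coe_snd',
    Complex.reCLM_apply, Complex.imCLM_apply, Complex.ofRealCLM_apply, smul_eq_mul,
    Complex.I_re, Complex.I_im, Complex.one_re, Complex.one_im, Complex.zero_re, Complex.zero_im]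
  simp only [Pi.add_apply, Pi.mul_apply, Pi.sub_apply]
  have hD2 : ((z.re * z.re + z.im * z.im : ℝ) : ℂ) - Complex.I * (u : ℂ) ≠ 0 := by
    intro h
    rw [Complex.ext_iff] at h
    simp at h
    apply hq
    have hre0 : z.re = 0 := by nlinarith [h.1, sq_nonneg z.re, sq_nonneg z.im]
    have him0 : z.im = 0 := by nlinarith [h.1, sq_nonneg z.re, sq_nonneg z.im]
    simp [Prod.ext_iff, Complex.ext_iff, hre0, him0, h.2]
  rw [g]
  simp only
  rw [Complex.mul_conj, Complex.normSq_apply,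
    show (starRingEnd ℂ) z = (z.re : ℂ) - (z.im : ℂ) * Complex.I from by simp [Complex.ext_iff]]
  rw [eq_div_iff hD2]
  have hN' : (((z.re * z.re + z.im * z.im) * (z.re * z.re + z.im * z.im) + u * u : ℝ) : ℂ) ≠ 0 := by
    exact_mod_cast hN0
  push_cast at hN' ⊢
  field_simp
  rw [div_eq_iff (by convert hN' using 1; ring)]
  apply Complex.ext <;> simp [pow_two] <;> ring

lemma den_ne (z : ℂ) (u : ℝ) (hq : (z, u) ≠ (0 : ℂ × ℝ)) :
    z * (starRingEnd ℂ) z - Complex.I * (u : ℂ) ≠ 0 := by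
  rw [Complex.mul_conj]
  intro h
  rw [Complex.ext_iff] at h
  simp at h
  apply hq
  simp [Prod.ext_iff, h.1, h.2]

lemma zopg_eq (q : ℂ × ℝ) (hq : q ≠ 0) :
    Zop g q = -4 * ((starRingEnd ℂ) q.1) ^ 2 / (q.1 * (starRingEnd ℂ) q.1 - Complex.I * q.2) ^ 2 := by
  obtain ⟨z, u⟩ := q
  have h1 : HasFDerivAt (fun q : ℂ × ℝ => q.1) (ContinuousLinearMap.fst ℝ ℂ ℝ) (z, u) := hasFDerivAt_fst
  have h2 : HasFDerivAt (fun q : ℂ × ℝ => q.2) (ContinuousLinearMap.snd ℝ ℂ ℝ) (z, u) := hasFDerivAt_snd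
  have hconj : HasFDerivAt (fun q : ℂ × ℝ => (starRingEnd ℂ) q.1)
      (Complex.conjCLE.toContinuousLinearMap.comp (ContinuousLinearMap.fst ℝ ℂ ℝ)) (z, u) :=
    (Complex.conjCLE.toContinuousLinearMap.hasFDerivAt).comp (z, u) h1
  have hofu : HasFDerivAt (fun q : ℂ × ℝ => ((q.2 : ℝ) : ℂ))
      (Complex.ofRealCLM.comp (ContinuousLinearMap.snd ℝ ℂ ℝ)) (z, u) :=
    (Complex.ofRealCLM.hasFDerivAt).comp (z, u) h2
  have hnum := hconj.const_mul (2 : ℂ)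
  have hden := (h1.mul hconj).sub (hofu.const_mul Complex.I)
  have hden0 : ((z, u).1 * (starRingEnd ℂ) (z, u).1 - Complex.I * ((z, u).2 : ℂ)) ≠ 0 :=
    den_ne z u hq
  have hinv := (hasDerivAt_inv hden0).comp_hasFDerivAt (z, u) hden
  have hg := hnum.mul hinv
  have hg2 : HasFDerivAt g _ (z, u) := hg.congr_of_eventuallyEq (Filter.Eventually.of_forall (fun w => by
    simp [g, div_eq_mul_inv]))
  have hfd := hg2.fderiv
  rw [Zop, hfd]
  simp only [ContinuousLinearMap.comp_apply, ContinuousLinearMap.smul_apply,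
    ContinuousLinearMap.add_apply, ContinuousLinearMap.sub_apply, ContinuousLinearMap.coe_fst',
    ContinuousLinearMap.coe_snd', ContinuousLinearEquiv.coe_coe, Complex.conjCLE_apply,
    Complex.ofRealCLM_apply, smul_eq_mul, map_one, Complex.conj_I, map_zero,
    Complex.ofReal_zero, Complex.ofReal_one, Function.comp]
  simp only [Pi.add_apply, Pi.mul_apply, Pi.sub_apply]
  have hD : z * (starRingEnd ℂ) z - Complex.I * (u : ℂ) ≠ 0 := den_ne z u hq
  field_simp [hD]
  rw [neg_div', div_left_inj' (pow_ne_zero 2 (by rwa [mul_comm]))]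
  linear_combination (3 * (starRingEnd ℂ) z ^ 2 - Complex.I * (u : ℂ)) * Complex.I_sq

lemma Zop_congr {f h : ℂ × ℝ → ℂ} {p : ℂ × ℝ} (he : f =ᶠ[nhds p] h) : Zop f p = Zop h p := by
  unfold Zop
  rw [he.fderiv_eq]

/-- For (z,u) ≠ (0,0), with F = log(|z|⁴+u²): Z Z F = −(Z F)² = −4z̄²/(|z|² − iu)². -/
theorem zop_zop_log_heisenberg (p : ℂ × ℝ) (hp : p ≠ 0) :
    Zop (Zop (fun q => ((Real.log (‖q.1‖ ^ 4 + q.2 ^ 2) : ℝ) : ℂ))) p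
        = -(Zop (fun q => ((Real.log (‖q.1‖ ^ 4 + q.2 ^ 2) : ℝ) : ℂ)) p) ^ 2 ∧
    Zop (Zop (fun q => ((Real.log (‖q.1‖ ^ 4 + q.2 ^ 2) : ℝ) : ℂ))) p
        = -4 * (starRingEnd ℂ p.1) ^ 2
            / ((‖p.1‖ : ℂ) ^ 2 - Complex.I * (p.2 : ℂ)) ^ 2 := by
  have hp' : (p.1, p.2) ≠ (0 : ℂ × ℝ) := by rwa [Prod.mk.eta]
  have hev : Zop Fh =ᶠ[nhds p] g := by
    filter_upwards [IsOpen.mem_nhds isOpen_compl_singleton hp] with w hw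
    exact zopF_eq w hw
  have h1 : Zop (Zop Fh) p = Zop g p := Zop_congr hev
  have h2 := zopg_eq p hp
  have hD : p.1 * (starRingEnd ℂ) p.1 - Complex.I * (p.2 : ℂ) ≠ 0 := den_ne p.1 p.2 hp'
  have habs : (‖p.1‖ : ℂ) ^ 2 = p.1 * (starRingEnd ℂ) p.1 := by
    rw [← Complex.ofReal_pow, Complex.sq_norm, Complex.mul_conj]
  constructor
  · show Zop (Zop Fh) p = -(Zop Fh p) ^ 2
    rw [h1, h2, zopF_eq p hp, g]
    field_simp
    ring
  · show Zop (Zop Fh) p = -4 * (starRingEnd ℂ p.1) ^ 2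
        / ((‖p.1‖ : ℂ) ^ 2 - Complex.I * (p.2 : ℂ)) ^ 2
    rw [h1, h2, habs]
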